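/- Let L be a natural number and let λ > L be real. Let z ∈ ℝ^{L+1} have entries z_i = i/λ − 1 for i = 0,…,L, and let 𝟙 ∈ ℝ^{L+1} be the all-ones vector. Then for every y ∈ ℝ^{L+1}, yᵀ(𝟙zᵀ + z𝟙ᵀ)y ≤ (L(L+1)/(2λ))·‖y‖²; equivalently, every eigenvalue of the symmetric matrix 𝟙zᵀ + z𝟙ᵀ is at most L(L+1)/(2λ). -/
import Mathlib


open Real Finset

lemma sumsq_aux (n : ℕ) : ∑ i ∈ Finset.range (n+1), (i:ℝ)^2
    = n*(n+1)*(2*n+1)/6 := by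
  induction n with
  | zero => simp
  | succ k ih => rw [Finset.sum_range_succ, ih]; push_cast; ring

theorem stmt_3 (L : ℕ) (lam : ℝ) (hlam : (L : ℝ) < lam)
    (z : Fin (L + 1) → ℝ) (hz : z = fun i : Fin (L + 1) => (i : ℝ) / lam - 1)
    (y : Fin (L + 1) → ℝ) :
    ∑ i : Fin (L + 1), ∑ j : Fin (L + 1), y i * (z j + z i) * y j ≤
      ((L : ℝ) * (L + 1) / (2 * lam)) * ∑ i : Fin (L + 1), (y i) ^ 2 := by
  have hL0 : (0:ℝ) ≤ L := Nat.cast_nonneg L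
  have hlam0 : 0 < lam := lt_of_le_of_lt hL0 hlam
  set S : ℝ := ∑ i : Fin (L+1), y i with hS
  set T : ℝ := ∑ i : Fin (L+1), ((i:ℝ)/lam) * y i with hT
  set N : ℝ := ∑ i : Fin (L+1), (y i)^2 with hN
  have hZ : ∑ i : Fin (L+1), z i * y i = T - S := by
    subst hz
    rw [hT, hS, ← Finset.sum_sub_distrib]
    exact Finset.sum_congr rfl (fun i _ => by ring)
  have hLHS : ∑ i : Fin (L + 1), ∑ j : Fin (L + 1), y i * (z j + z i) * y j
      = 2 * S * (T - S) := by
    have expand : ∀ i j : Fin (L+1),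
        y i * (z j + z i) * y j = y i * (z j * y j) + (z i * y i) * y j := by
      intro i j; ring
    simp_rw [expand, Finset.sum_add_distrib, ← Finset.mul_sum, hZ,
      ← Finset.sum_mul, hZ]
    rw [← hS]; ring
  have hN0 : 0 ≤ N := Finset.sum_nonneg fun i _ => sq_nonneg _
  -- Cauchy-Schwarz
  have hCS : T^2 ≤ (∑ i : Fin (L+1), ((i:ℝ)/lam)^2) * N := by
    rw [hT, hN]
    exact Finset.sum_mul_sq_le_sq_mul_sq Finset.univ _ _
  have hA : (∑ i : Fin (L+1), ((i:ℝ)/lam)^2)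
      = (L:ℝ)*(L+1)*(2*L+1)/(6*lam^2) := by
    have : ∑ i : Fin (L+1), ((i:ℝ)/lam)^2
        = (∑ i ∈ Finset.range (L+1), (i:ℝ)^2) / lam^2 := by
      rw [Finset.sum_div, Fin.sum_univ_eq_sum_range (fun i => ((i:ℝ)/lam)^2)]
      exact Finset.sum_congr rfl (fun i _ => by field_simp)
    rw [this, sumsq_aux]
    ring
  rw [hA] at hCS
  have hLL : (0:ℝ) ≤ (L:ℝ)*((L:ℝ)-1) := by
    rcases Nat.eq_zero_or_pos L with h | h
    · simp [h]
    · have : (1:ℝ) ≤ L := by exact_mod_cast h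
      nlinarith
  -- key scalar inequality
  have hkey : (L:ℝ)*(L+1)*(2*L+1)/(6*lam^2) ≤ (L:ℝ)*(L+1)/lam := by
    rw [div_le_div_iff₀ (by positivity) hlam0]
    nlinarith [mul_nonneg (mul_nonneg hL0 (by linarith : (0:ℝ) ≤ (L:ℝ)+1)) (mul_pos hlam0 (by linarith : (0:ℝ) < lam - L)).le,
      mul_nonneg (mul_nonneg hLL (by linarith : (0:ℝ) ≤ (L:ℝ)+1)) (mul_pos hlam0 hlam0).le]
  have heq : (L:ℝ) * (L+1) / (2 * lam) = ((L:ℝ)*(L+1)/lam)/2 := by ring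
  rw [heq]
  rw [hLHS]
  nlinarith [sq_nonneg (2*S - T), mul_le_mul_of_nonneg_right hkey hN0]
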